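/- Let h be a Steinhaus or Rademacher random multiplicative function and λ(n) real numbers, and let P(n) denote the largest prime factor of n. Then for any 0 < q ≤ 1 and x ≥ 2, E|∑_{n≤x, P(n)>√x} h(n)λ(n)|^{2q} ≤ 2 E|∑_{n≤x} h(n)λ(n)|^{2q}. -/

import Mathlib

open MeasureTheory ProbabilityTheory Finset Classical

/-- `h` is a Steinhaus random multiplicative function. -/
def IsSteinhausRMF {Ω : Type*} [MeasureSpace Ω] (h : ℕ → Ω → ℂ) : Prop :=
  (∀ n, Measurable (h n)) ∧
  (∀ m n : ℕ, 0 < m → 0 < n → ∀ ω, h (m * n) ω = h m ω * h n ω) ∧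
  (∀ ω, h 1 ω = 1) ∧
  iIndepFun (fun p : Nat.Primes => h p) volume ∧
  (∀ p : ℕ, p.Prime →
    Measure.map (h p) volume =
      Measure.map (fun t : ℝ => Complex.exp (2 * Real.pi * Complex.I * t))
        (volume.restrict (Set.Ioc (0 : ℝ) 1)))

/-- `h` is a Rademacher random multiplicative function. -/
def IsRademacherRMF {Ω : Type*} [MeasureSpace Ω] (h : ℕ → Ω → ℂ) : Prop :=
  (∀ n, Measurable (h n)) ∧
  (∀ n : ℕ, Squarefree n → ∀ ω, h n ω = ∏ p ∈ n.primeFactors, h p ω) ∧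
  (∀ n : ℕ, ¬ Squarefree n → ∀ ω, h n ω = 0) ∧
  iIndepFun (fun p : Nat.Primes => h p) volume ∧
  (∀ p : ℕ, p.Prime →
    volume {ω | h p ω = 1} = 1 / 2 ∧ volume {ω | h p ω = -1} = 1 / 2)


noncomputable def eFun : ℝ → ℂ := fun t => Complex.exp (2 * Real.pi * Complex.I * t)

lemma eFun_periodic : Function.Periodic eFun 1 := by
  intro t
  simp only [eFun]
  push_cast
  rw [mul_add, Complex.exp_add, mul_one, Complex.exp_two_pi_mul_I, mul_one]

lemma eFun_continuous : Continuous eFun := by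
  unfold eFun; fun_prop

lemma map_eFun_Ioc (t : ℝ) :
    Measure.map eFun (volume.restrict (Set.Ioc t (t + 1))) =
      Measure.map eFun (volume.restrict (Set.Ioc (0:ℝ) (0 + 1))) := by
  haveI : Fact ((0:ℝ) < 1) := ⟨one_pos⟩
  set E : AddCircle (1:ℝ) → ℂ := fun x => eFun ((AddCircle.equivIoc 1 0 x : Set.Ioc (0:ℝ) (0+1)) : ℝ) with hE
  have hEmeas : Measurable E :=
    eFun_continuous.measurable.comp
      (measurable_subtype_coe.comp (AddCircle.measurableEquivIoc 1 0).measurable)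
  have hcomp : ∀ s : ℝ, E ((s : AddCircle (1:ℝ))) = eFun s := by
    intro s
    set y : ℝ := ((AddCircle.equivIoc 1 0 (s : AddCircle (1:ℝ)) : Set.Ioc (0:ℝ) (0+1)) : ℝ) with hydef
    have hy : (y : AddCircle (1:ℝ)) = (s : AddCircle (1:ℝ)) :=
      (AddCircle.equivIoc 1 0).symm_apply_apply (s : AddCircle (1:ℝ))
    have hk : ∃ k : ℤ, y = s + k • (1:ℝ) := by
      rw [QuotientAddGroup.eq_iff_sub_mem] at hy
      obtain ⟨k, hk⟩ := hy
      refine ⟨k, ?_⟩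
      have : k • (1:ℝ) = y - s := hk
      linarith [this]
    obtain ⟨k, hk⟩ := hk
    have : E ((s : AddCircle (1:ℝ))) = eFun y := rfl
    rw [this, hk]
    simpa [zsmul_eq_mul] using eFun_periodic.int_mul k s
  have key : ∀ u : ℝ, Measure.map eFun (volume.restrict (Set.Ioc u (u + 1))) = Measure.map E volume := by
    intro u
    have h1 : Measure.map ((↑) : ℝ → AddCircle (1:ℝ)) (volume.restrict (Set.Ioc u (u + 1))) = volume :=
      (AddCircle.measurePreserving_mk 1 u).map_eq
    calc Measure.map eFun (volume.restrict (Set.Ioc u (u + 1)))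
        = Measure.map (E ∘ ((↑) : ℝ → AddCircle (1:ℝ))) (volume.restrict (Set.Ioc u (u + 1))) := by
          congr 1; ext s; exact (hcomp s).symm
      _ = Measure.map E (Measure.map ((↑) : ℝ → AddCircle (1:ℝ)) (volume.restrict (Set.Ioc u (u + 1)))) :=
          (Measure.map_map hEmeas AddCircle.measurable_mk').symm
      _ = Measure.map E volume := by rw [h1]
  rw [key t, key 0]

lemma map_neg_eFun :
    Measure.map (fun t : ℝ => -eFun t) (volume.restrict (Set.Ioc (0:ℝ) 1)) =
      Measure.map eFun (volume.restrict (Set.Ioc (0:ℝ) 1)) := by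
  have hshift : (fun t : ℝ => -eFun t) = eFun ∘ (fun t : ℝ => t + 1/2) := by
    funext t
    simp only [Function.comp_apply, eFun]
    push_cast
    have : (2:ℂ) * Real.pi * Complex.I * ((t:ℂ) + 1/2) =
        2 * Real.pi * Complex.I * t + Real.pi * Complex.I := by ring
    rw [this, Complex.exp_add, Complex.exp_pi_mul_I]
    ring
  have hmapadd : Measure.map (fun t : ℝ => t + 1/2) (volume.restrict (Set.Ioc (0:ℝ) 1)) =
      volume.restrict (Set.Ioc (1/2 : ℝ) (1/2 + 1)) := by
    have hpre : (fun t : ℝ => t + 1/2) ⁻¹' (Set.Ioc (1/2 : ℝ) (1/2 + 1)) = Set.Ioc (0:ℝ) 1 := by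
      ext t; simp only [Set.mem_preimage, Set.mem_Ioc]
      constructor <;> (rintro ⟨h1, h2⟩; constructor <;> linarith)
    rw [← hpre, ← Measure.restrict_map (measurable_add_const _) measurableSet_Ioc,
      MeasureTheory.map_add_right_eq_self volume (1/2 : ℝ)]
  have h01 : Set.Ioc (0:ℝ) 1 = Set.Ioc (0:ℝ) (0 + 1) := by norm_num
  rw [hshift, ← Measure.map_map eFun_continuous.measurable (measurable_add_const _), hmapadd,
    map_eFun_Ioc (1/2), ← h01]

lemma rademacher_law {Ω : Type*} [MeasureSpace Ω] [IsProbabilityMeasure (volume : Measure Ω)]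
    (f : Ω → ℂ) (hf : Measurable f)
    (h1 : volume {ω | f ω = 1} = 1 / 2) (h2 : volume {ω | f ω = -1} = 1 / 2) :
    Measure.map f volume = (1/2 : ENNReal) • Measure.dirac (1:ℂ) +
      (1/2 : ENNReal) • Measure.dirac (-1:ℂ) := by
  ext A hA
  rw [Measure.map_apply hf hA]
  have hU : MeasurableSet {ω | f ω = 1} := hf (measurableSet_singleton 1)
  have hV : MeasurableSet {ω | f ω = -1} := hf (measurableSet_singleton (-1))
  have hdisj : Disjoint {ω | f ω = 1} {ω | f ω = -1} := by
    rw [Set.disjoint_left]; intro ω hω1 hω2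
    simp only [Set.mem_setOf_eq] at hω1 hω2
    rw [hω1] at hω2; norm_num at hω2
  have hWfull : volume ({ω | f ω = 1} ∪ {ω | f ω = -1}) = 1 := by
    rw [measure_union hdisj hV, h1, h2]
    rw [ENNReal.div_add_div_same, one_add_one_eq_two]
    exact ENNReal.div_self (by norm_num) (by norm_num)
  have hcompl : volume (({ω | f ω = 1} ∪ {ω | f ω = -1})ᶜ) = 0 := by
    rw [measure_compl ((hU.union hV)) (measure_ne_top _ _), hWfull, measure_univ, tsub_self]
  have hsplit : volume (f ⁻¹' A) =
      volume (f ⁻¹' A ∩ {ω | f ω = 1}) + volume (f ⁻¹' A ∩ {ω | f ω = -1}) := by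
    have h3 : volume (f ⁻¹' A) = volume (f ⁻¹' A ∩ ({ω | f ω = 1} ∪ {ω | f ω = -1})) := by
      refine (measure_inter_conull ?_).symm
      exact hcompl
    rw [h3, Set.inter_union_distrib_left]
    refine measure_union ?_ ((hf hA).inter hV)
    exact hdisj.mono Set.inter_subset_right Set.inter_subset_right
  have e1 : f ⁻¹' A ∩ {ω | f ω = 1} = if (1:ℂ) ∈ A then {ω | f ω = 1} else ∅ := by
    split_ifs with hmem
    · ext ω; simp only [Set.mem_inter_iff, Set.mem_preimage, Set.mem_setOf_eq]
      exact ⟨fun ⟨_, h⟩ => h, fun h => ⟨by rw [h]; exact hmem, h⟩⟩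
    · ext ω; simp only [Set.mem_inter_iff, Set.mem_preimage, Set.mem_setOf_eq, Set.mem_empty_iff_false]
      constructor
      · rintro ⟨ha, hb⟩; rw [hb] at ha; exact hmem ha
      · exact False.elim
  have e2 : f ⁻¹' A ∩ {ω | f ω = -1} = if (-1:ℂ) ∈ A then {ω | f ω = -1} else ∅ := by
    split_ifs with hmem
    · ext ω; simp only [Set.mem_inter_iff, Set.mem_preimage, Set.mem_setOf_eq]
      exact ⟨fun ⟨_, h⟩ => h, fun h => ⟨by rw [h]; exact hmem, h⟩⟩
    · ext ω; simp only [Set.mem_inter_iff, Set.mem_preimage, Set.mem_setOf_eq, Set.mem_empty_iff_false]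
      constructor
      · rintro ⟨ha, hb⟩; rw [hb] at ha; exact hmem ha
      · exact False.elim
  rw [hsplit, e1, e2]
  simp only [Measure.coe_add, Measure.coe_smul, Pi.add_apply, Pi.smul_apply,
    Measure.dirac_apply' _ hA, smul_eq_mul]
  by_cases hm1 : (1:ℂ) ∈ A <;> by_cases hm2 : (-1:ℂ) ∈ A <;>
    simp [hm1, hm2, h1, h2, Set.indicator_of_mem, Set.indicator_of_notMem, measure_empty]

lemma rademacher_sym {Ω : Type*} [MeasureSpace Ω] [IsProbabilityMeasure (volume : Measure Ω)]
    (f : Ω → ℂ) (hf : Measurable f)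
    (h1 : volume {ω | f ω = 1} = 1 / 2) (h2 : volume {ω | f ω = -1} = 1 / 2) :
    Measure.map (fun ω => -f ω) volume = Measure.map f volume := by
  have : (fun ω => -f ω) = (fun z : ℂ => -z) ∘ f := rfl
  rw [this, ← Measure.map_map measurable_neg hf, rademacher_law f hf h1 h2,
    Measure.map_add _ _ measurable_neg, Measure.map_smul, Measure.map_smul,
    Measure.map_dirac' measurable_neg, Measure.map_dirac' measurable_neg]
  simp [add_comm]

noncomputable def Dset (N p : ℕ) : Finset ℕ := ((Finset.range (N+1)).filter Nat.Prime).erase p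

noncomputable def psiF (N p : ℕ) (n : ℕ) (z : ℂ × (↥(Dset N p) → ℂ)) : ℂ :=
  ∏ q ∈ n.primeFactors, (if hq : q ∈ Dset N p then z.2 ⟨q, hq⟩ else z.1) ^ (n.factorization q)

lemma mem_bigP {N n q : ℕ} (hn1 : 1 ≤ n) (hnN : n ≤ N) (hq : q ∈ n.primeFactors) :
    q ∈ (Finset.range (N+1)).filter Nat.Prime := by
  rw [Finset.mem_filter, Finset.mem_range]
  have hqp := Nat.prime_of_mem_primeFactors hq
  have hdvd := Nat.dvd_of_mem_primeFactors hq
  exact ⟨Nat.lt_succ_of_le (le_trans (Nat.le_of_dvd hn1 hdvd) hnN), hqp⟩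

lemma psiF_measurable (N p n : ℕ) : Measurable (psiF N p n) := by
  apply Finset.measurable_prod
  intro q _
  apply Measurable.pow_const
  by_cases hq : q ∈ Dset N p
  · simp only [hq, dif_pos]
    exact (measurable_pi_apply _).comp measurable_snd
  · simp only [hq, dif_neg, not_false_iff]
    exact measurable_fst

lemma psiF_eval {Ω : Type*} [MeasureSpace Ω] (h : ℕ → Ω → ℂ) {N p n : ℕ}
    (hp : p.Prime) (hn1 : 1 ≤ n) (hnN : n ≤ N) (ω : Ω) :
    psiF N p n (h p ω, fun q : ↥(Dset N p) => h q ω) =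
      ∏ q ∈ n.primeFactors, h q ω ^ (n.factorization q) := by
  apply Finset.prod_congr rfl
  intro q hq
  by_cases hqD : q ∈ Dset N p
  · simp only [hqD, dif_pos]
  · simp only [hqD, dif_neg, not_false_iff]
    have hqbig := mem_bigP hn1 hnN hq
    have : q = p := by
      by_contra hne
      exact hqD (Finset.mem_erase.mpr ⟨hne, hqbig⟩)
    rw [this]

lemma psiF_neg {N p n : ℕ} (hp : p.Prime) (hn1 : 1 ≤ n) (hnN : n ≤ N) (hbig : N < p * p)
    (z : ℂ × (↥(Dset N p) → ℂ)) :
    psiF N p n (-z.1, z.2) = (if p ∣ n then (-1:ℂ) else 1) * psiF N p n z := by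
  have hn0 : n ≠ 0 := by omega
  by_cases hdvd : p ∣ n
  · -- p ∈ primeFactors n, exponent 1
    have hpmem : p ∈ n.primeFactors := Nat.mem_primeFactors.mpr ⟨hp, hdvd, hn0⟩
    have hfac1 : n.factorization p = 1 := by
      have hub : ¬ (p ^ 2 ∣ n) := by
        intro hcon
        have : p ^ 2 ≤ n := Nat.le_of_dvd (by omega) hcon
        have : p * p ≤ N := by nlinarith [this, hnN, pow_two p]
        omega
      have h2 : ¬ (2 ≤ n.factorization p) := by
        intro hcon
        exact hub ((Nat.Prime.pow_dvd_iff_le_factorization hp hn0).mpr hcon)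
      have h1 : 1 ≤ n.factorization p := by
        have := (Nat.Prime.pow_dvd_iff_le_factorization hp hn0).mp (by rwa [pow_one])
        omega
      omega
    have hpD : p ∉ Dset N p := fun hc => (Finset.mem_erase.mp hc).1 rfl
    rw [if_pos hdvd]
    unfold psiF
    rw [← Finset.mul_prod_erase _ _ hpmem, ← Finset.mul_prod_erase _ _ hpmem]
    have hrest : ∀ q ∈ n.primeFactors.erase p,
        (if hq : q ∈ Dset N p then z.2 ⟨q, hq⟩ else (-z.1)) ^ (n.factorization q) =
        (if hq : q ∈ Dset N p then z.2 ⟨q, hq⟩ else z.1) ^ (n.factorization q) := by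
      intro q hq
      have hqne := (Finset.mem_erase.mp hq).1
      have hqD : q ∈ Dset N p :=
        Finset.mem_erase.mpr ⟨hqne, mem_bigP hn1 hnN (Finset.mem_of_mem_erase hq)⟩
      simp only [hqD, dif_pos]
    rw [Finset.prod_congr rfl hrest]
    simp only [hpD, dif_neg, not_false_iff, hfac1, pow_one]
    ring
  · rw [if_neg hdvd, one_mul]
    unfold psiF
    apply Finset.prod_congr rfl
    intro q hq
    have hqne : q ≠ p := fun hc => hdvd (hc ▸ Nat.dvd_of_mem_primeFactors hq)
    have hqD : q ∈ Dset N p := Finset.mem_erase.mpr ⟨hqne, mem_bigP hn1 hnN hq⟩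
    simp only [hqD, dif_pos]

lemma dset_prime {N p : ℕ} (q : ↥(Dset N p)) : Nat.Prime q.1 :=
  (Finset.mem_filter.mp (Finset.mem_of_mem_erase q.2)).2

lemma indep_pair {Ω : Type*} [MeasureSpace Ω] [IsProbabilityMeasure (volume : Measure Ω)]
    (h : ℕ → Ω → ℂ) (hmeas : ∀ n, Measurable (h n))
    (hind : iIndepFun (fun p : Nat.Primes => h p) volume)
    (N p : ℕ) (hp : p.Prime) :
    IndepFun (h p) (fun ω (q : ↥(Dset N p)) => h q ω) volume := by
  set pp : Nat.Primes := ⟨p, hp⟩ with hpp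
  let emb : ↥(Dset N p) ↪ Nat.Primes :=
    ⟨fun q => ⟨q.1, dset_prime q⟩, by
      intro a b hab
      apply Subtype.ext
      exact congrArg (fun s : Nat.Primes => s.1) hab⟩
  set S : Finset Nat.Primes := {pp} with hS
  set T : Finset Nat.Primes := (Dset N p).attach.map emb with hT
  have hST : Disjoint S T := by
    rw [Finset.disjoint_left]
    intro a haS haT
    rw [hS, Finset.mem_singleton] at haS
    rw [hT, Finset.mem_map] at haT
    obtain ⟨q, _, hq⟩ := haT
    have : q.1 = p := by rw [haS] at hq; exact congrArg Subtype.val hq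
    exact (Finset.mem_erase.mp q.2).1 this
  have base := hind.indepFun_finset S T hST (fun i => hmeas i)
  have memT : ∀ q : ↥(Dset N p), emb q ∈ T := fun q =>
    Finset.mem_map_of_mem emb (Finset.mem_attach _ q)
  let φ₁ : (↥S → ℂ) → ℂ := fun v => v ⟨pp, Finset.mem_singleton_self pp⟩
  let φ₂ : (↥T → ℂ) → (↥(Dset N p) → ℂ) := fun v q => v ⟨emb q, memT q⟩
  have hφ₁ : Measurable φ₁ := measurable_pi_apply _
  have hφ₂ : Measurable φ₂ := measurable_pi_lambda _ (fun q => measurable_pi_apply _)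
  have := base.comp hφ₁ hφ₂
  exact this

lemma core_flip {Ω : Type*} [MeasureSpace Ω] [IsProbabilityMeasure (volume : Measure Ω)]
    (h : ℕ → Ω → ℂ) (hmeas : ∀ n, Measurable (h n))
    (hind : iIndepFun (fun p : Nat.Primes => h p) volume)
    (hsym : ∀ p : ℕ, p.Prime →
      Measure.map (fun ω => - h p ω) volume = Measure.map (h p) volume)
    (N : ℕ) (w : ℕ → ℂ) (r : ℝ) (hr : 0 ≤ r) (Q : Finset ℕ) :
    (∀ p ∈ Q, Nat.Prime p) → (∀ p ∈ Q, N < p * p) →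
    ∫ ω, ‖∑ n ∈ Finset.Icc 1 N, (if ∃ p ∈ Q, p ∣ n then (-1:ℂ) else 1) *
        ((∏ q ∈ n.primeFactors, h q ω ^ (n.factorization q)) * w n)‖ ^ r =
    ∫ ω, ‖∑ n ∈ Finset.Icc 1 N,
        (∏ q ∈ n.primeFactors, h q ω ^ (n.factorization q)) * w n‖ ^ r := by
  induction Q using Finset.induction_on with
  | empty =>
    intro _ _
    simp only [Finset.notMem_empty, false_and, exists_false, if_false, one_mul,
      exists_prop]
  | @insert p Q₀ hpQ IH =>
    intro hQprime hQbig
    have hp : p.Prime := hQprime p (Finset.mem_insert_self _ _)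
    have hbig : N < p * p := hQbig p (Finset.mem_insert_self _ _)
    have hQ₀prime : ∀ q ∈ Q₀, Nat.Prime q := fun q hq =>
      hQprime q (Finset.mem_insert_of_mem hq)
    have hQ₀big : ∀ q ∈ Q₀, N < q * q := fun q hq => hQbig q (Finset.mem_insert_of_mem hq)
    -- sign splitting for n in range
    have hsign : ∀ n ∈ Finset.Icc 1 N,
        (if ∃ q ∈ insert p Q₀, q ∣ n then (-1:ℂ) else 1) =
        (if p ∣ n then (-1:ℂ) else 1) * (if ∃ q ∈ Q₀, q ∣ n then (-1:ℂ) else 1) := by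
      intro n hn
      rw [Finset.mem_Icc] at hn
      by_cases hdvd : p ∣ n
      · have hnone : ¬ ∃ q ∈ Q₀, q ∣ n := by
          rintro ⟨q, hqQ, hqdvd⟩
          have hq : q.Prime := hQ₀prime q hqQ
          have hqbig := hQ₀big q hqQ
          have hne : q ≠ p := fun hc => hpQ (hc ▸ hqQ)
          have hcop : Nat.Coprime q p := (Nat.coprime_primes hq hp).mpr hne
          have : q * p ∣ n := Nat.Coprime.mul_dvd_of_dvd_of_dvd hcop hqdvd hdvd
          have hle : q * p ≤ N := le_trans (Nat.le_of_dvd (by omega) this) hn.2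
          have h1 : q * p * (q * p) ≤ N * N := Nat.mul_le_mul hle hle
          have h2 : N * N < (q * q) * (p * p) := Nat.mul_lt_mul'' hqbig hbig
          have h3 : q * p * (q * p) = (q * q) * (p * p) := by ring
          omega
        rw [if_pos hdvd, if_neg hnone, if_pos ⟨p, Finset.mem_insert_self _ _, hdvd⟩, mul_one]
      · have : (∃ q ∈ insert p Q₀, q ∣ n) ↔ (∃ q ∈ Q₀, q ∣ n) := by
          constructor
          · rintro ⟨q, hqmem, hqdvd⟩
            rcases Finset.mem_insert.mp hqmem with hq | hq
            · exact absurd (hq ▸ hqdvd) hdvd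
            · exact ⟨q, hq, hqdvd⟩
          · rintro ⟨q, hq, hqdvd⟩
            exact ⟨q, Finset.mem_insert_of_mem hq, hqdvd⟩
        rw [if_neg hdvd, one_mul]
        by_cases hex : ∃ q ∈ Q₀, q ∣ n
        · rw [if_pos (this.mpr hex), if_pos hex]
        · rw [if_neg (fun hc => hex (this.mp hc)), if_neg hex]
    -- set up the pair change of variables
    set Y : Ω → ↥(Dset N p) → ℂ := fun ω q => h q ω with hY
    have hYmeas : Measurable Y := measurable_pi_lambda _ (fun q => hmeas q)
    have hInd : IndepFun (h p) Y volume := indep_pair h hmeas hind N p hp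
    have hIndNeg : IndepFun (fun ω => - h p ω) Y volume := by
      have := hInd.comp (measurable_neg : Measurable (fun z : ℂ => -z)) measurable_id
      exact this
    have hpair1 : Measure.map (fun ω => (h p ω, Y ω)) volume =
        (Measure.map (h p) volume).prod (Measure.map Y volume) :=
      (indepFun_iff_map_prod_eq_prod_map_map ((hmeas p).aemeasurable)
        hYmeas.aemeasurable).mp hInd
    have hpair2 : Measure.map (fun ω => (- h p ω, Y ω)) volume =
        (Measure.map (fun ω => - h p ω) volume).prod (Measure.map Y volume) :=
      (indepFun_iff_map_prod_eq_prod_map_map ((hmeas p).neg.aemeasurable)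
        hYmeas.aemeasurable).mp hIndNeg
    have hmaps : Measure.map (fun ω => (- h p ω, Y ω)) volume =
        Measure.map (fun ω => (h p ω, Y ω)) volume := by
      rw [hpair2, hsym p hp, hpair1]
    set Φ : ℂ × (↥(Dset N p) → ℂ) → ℝ := fun z =>
      ‖∑ n ∈ Finset.Icc 1 N, (if ∃ q ∈ Q₀, q ∣ n then (-1:ℂ) else 1) *
        (psiF N p n z * w n)‖ ^ r with hΦ
    have hΦmeas : Measurable Φ := by
      apply (Real.continuous_rpow_const hr).measurable.comp
      apply Measurable.norm
      apply Finset.measurable_sum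
      intro n _
      exact (((psiF_measurable N p n).mul_const _).const_mul _)
    -- identify the two integrands
    have hL : ∀ ω, Φ (- h p ω, Y ω) =
        ‖∑ n ∈ Finset.Icc 1 N, (if ∃ q ∈ insert p Q₀, q ∣ n then (-1:ℂ) else 1) *
          ((∏ q ∈ n.primeFactors, h q ω ^ (n.factorization q)) * w n)‖ ^ r := by
      intro ω
      simp only [hΦ]
      refine congrArg (fun y : ℝ => y ^ r) (congrArg norm ?_)
      apply Finset.sum_congr rfl
      intro n hn
      rw [Finset.mem_Icc] at hn
      have hneg := psiF_neg hp hn.1 hn.2 hbig (h p ω, Y ω)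
      have heval := psiF_eval h hp hn.1 hn.2 ω (N := N) (p := p)
      have : psiF N p n (-(h p ω, Y ω).1, (h p ω, Y ω).2) = psiF N p n (- h p ω, Y ω) := rfl
      rw [← this, hneg, heval, hsign n (Finset.mem_Icc.mpr hn)]
      ring
    have hR : ∀ ω, Φ (h p ω, Y ω) =
        ‖∑ n ∈ Finset.Icc 1 N, (if ∃ q ∈ Q₀, q ∣ n then (-1:ℂ) else 1) *
          ((∏ q ∈ n.primeFactors, h q ω ^ (n.factorization q)) * w n)‖ ^ r := by
      intro ω
      simp only [hΦ]
      refine congrArg (fun y : ℝ => y ^ r) (congrArg norm ?_)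
      apply Finset.sum_congr rfl
      intro n hn
      rw [Finset.mem_Icc] at hn
      rw [psiF_eval h hp hn.1 hn.2 ω]
    have hstep : ∫ ω, Φ (- h p ω, Y ω) = ∫ ω, Φ (h p ω, Y ω) := by
      rw [← integral_map (((show Measurable (fun ω => - h p ω) from (hmeas p).neg).prodMk hYmeas).aemeasurable)
          hΦmeas.aestronglyMeasurable,
        ← integral_map (((hmeas p).prodMk hYmeas).aemeasurable)
          hΦmeas.aestronglyMeasurable, hmaps]
    calc ∫ ω, ‖∑ n ∈ Finset.Icc 1 N, (if ∃ q ∈ insert p Q₀, q ∣ n then (-1:ℂ) else 1) *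
            ((∏ q ∈ n.primeFactors, h q ω ^ (n.factorization q)) * w n)‖ ^ r
        = ∫ ω, Φ (- h p ω, Y ω) := by
          apply integral_congr_ae
          filter_upwards with ω using (hL ω).symm
      _ = ∫ ω, Φ (h p ω, Y ω) := hstep
      _ = ∫ ω, ‖∑ n ∈ Finset.Icc 1 N, (if ∃ q ∈ Q₀, q ∣ n then (-1:ℂ) else 1) *
            ((∏ q ∈ n.primeFactors, h q ω ^ (n.factorization q)) * w n)‖ ^ r := by
          apply integral_congr_ae
          filter_upwards with ω using hR ω
      _ = _ := IH hQ₀prime hQ₀big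

lemma steinhaus_rep {Ω : Type*} [MeasureSpace Ω] (h : ℕ → Ω → ℂ)
    (hmul : ∀ m n : ℕ, 0 < m → 0 < n → ∀ ω, h (m * n) ω = h m ω * h n ω)
    (hone : ∀ ω, h 1 ω = 1) (n : ℕ) (hn : 1 ≤ n) (ω : Ω) :
    h n ω = ∏ q ∈ n.primeFactors, h q ω ^ (n.factorization q) := by
  have hcop : ∀ a b : ℕ, Nat.Coprime a b → h (a * b) ω = h a ω * h b ω := by
    intro a b hab
    rcases Nat.eq_zero_or_pos a with ha | ha
    · subst ha
      rw [Nat.coprime_zero_left] at hab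
      subst hab
      simp [hone ω]
    rcases Nat.eq_zero_or_pos b with hb | hb
    · subst hb
      rw [Nat.coprime_zero_right] at hab
      subst hab
      simp [hone ω]
    exact hmul a b ha hb ω
  have hpow : ∀ (q k : ℕ), 0 < q → h (q ^ k) ω = h q ω ^ k := by
    intro q k hq
    induction k with
    | zero => simp [hone ω]
    | succ k ih =>
      rw [pow_succ, hmul (q ^ k) q (Nat.pow_pos (n := k) hq) hq ω, ih, pow_succ]
  have key := Nat.multiplicative_factorization (fun k => h k ω) hcop (hone ω) (by omega : n ≠ 0)
  rw [key, Nat.prod_factorization_eq_prod_primeFactors]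
  exact Finset.prod_congr rfl fun q hq =>
    hpow q _ (Nat.prime_of_mem_primeFactors hq).pos

lemma rademacher_rep {Ω : Type*} [MeasureSpace Ω] (h : ℕ → Ω → ℂ)
    (hsf : ∀ n : ℕ, Squarefree n → ∀ ω, h n ω = ∏ p ∈ n.primeFactors, h p ω)
    (hnsf : ∀ n : ℕ, ¬ Squarefree n → ∀ ω, h n ω = 0) (n : ℕ) (hn : 1 ≤ n) (ω : Ω) :
    h n ω = (if Squarefree n then (1:ℂ) else 0) *
      ∏ q ∈ n.primeFactors, h q ω ^ (n.factorization q) := by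
  by_cases hs : Squarefree n
  · rw [if_pos hs, one_mul, hsf n hs ω]
    refine Finset.prod_congr rfl fun q hq => ?_
    have h1 : n.factorization q = 1 := by
      have hle := (Nat.squarefree_iff_factorization_le_one (by omega)).mp hs q
      have hge : 1 ≤ n.factorization q := by
        rw [← Nat.Prime.pow_dvd_iff_le_factorization (Nat.prime_of_mem_primeFactors hq) (by omega),
          pow_one]
        exact Nat.dvd_of_mem_primeFactors hq
      omega
    rw [h1, pow_one]
  · rw [if_neg hs, zero_mul, hnsf n hs ω]

lemma eFun_norm (t : ℝ) : ‖eFun t‖ = 1 := by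
  unfold eFun
  rw [Complex.norm_exp]
  have : (2 * ↑Real.pi * Complex.I * ↑t).re = 0 := by
    simp [Complex.mul_re, Complex.mul_im]
  rw [this, Real.exp_zero]

lemma ae_of_prob_eq_one {Ω : Type*} [MeasureSpace Ω] [IsProbabilityMeasure (volume : Measure Ω)]
    {s : Set Ω} (hs : MeasurableSet s) (h1 : volume s = 1) : ∀ᵐ ω, ω ∈ s := by
  rw [ae_iff]
  have : {ω | ¬ ω ∈ s} = sᶜ := rfl
  rw [this, measure_compl hs (measure_ne_top _ _), h1, measure_univ, tsub_self]

lemma steinhaus_norm_one {Ω : Type*} [MeasureSpace Ω]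
    [IsProbabilityMeasure (volume : Measure Ω)] (h : ℕ → Ω → ℂ)
    (hmeas : ∀ n, Measurable (h n))
    (hlaw : ∀ p : ℕ, p.Prime → Measure.map (h p) volume =
      Measure.map eFun (volume.restrict (Set.Ioc (0 : ℝ) 1)))
    (p : ℕ) (hp : p.Prime) : ∀ᵐ ω, ‖h p ω‖ = 1 := by
  have hA : MeasurableSet {z : ℂ | ‖z‖ = 1} :=
    measurable_norm (measurableSet_singleton (1:ℝ))
  have hfull : volume {ω : Ω | ‖h p ω‖ = 1} = 1 := by
    have h1 : {ω : Ω | ‖h p ω‖ = 1} = h p ⁻¹' {z : ℂ | ‖z‖ = 1} := rfl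
    rw [h1, ← Measure.map_apply (hmeas p) hA, hlaw p hp,
      Measure.map_apply eFun_continuous.measurable hA]
    have h2 : eFun ⁻¹' {z : ℂ | ‖z‖ = 1} = Set.univ := by
      ext t; simpa using eFun_norm t
    rw [h2, Measure.restrict_apply MeasurableSet.univ, Set.univ_inter, Real.volume_Ioc]
    norm_num
  exact ae_of_prob_eq_one (hmeas p hA) hfull

lemma rademacher_norm_one {Ω : Type*} [MeasureSpace Ω]
    [IsProbabilityMeasure (volume : Measure Ω)] (h : ℕ → Ω → ℂ)
    (hmeas : ∀ n, Measurable (h n))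
    (hlaw : ∀ p : ℕ, p.Prime →
      volume {ω | h p ω = 1} = 1 / 2 ∧ volume {ω | h p ω = -1} = 1 / 2)
    (p : ℕ) (hp : p.Prime) : ∀ᵐ ω, ‖h p ω‖ = 1 := by
  obtain ⟨h1, h2⟩ := hlaw p hp
  have hdisj : Disjoint {ω : Ω | h p ω = 1} {ω : Ω | h p ω = -1} := by
    rw [Set.disjoint_left]; intro ω hω1 hω2
    simp only [Set.mem_setOf_eq] at hω1 hω2
    rw [hω1] at hω2; norm_num at hω2
  have hV : MeasurableSet {ω : Ω | h p ω = -1} := hmeas p (measurableSet_singleton (-1))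
  have hunion : volume ({ω : Ω | h p ω = 1} ∪ {ω : Ω | h p ω = -1}) = 1 := by
    rw [measure_union hdisj hV, h1, h2, ENNReal.div_add_div_same, one_add_one_eq_two]
    exact ENNReal.div_self (by norm_num) (by norm_num)
  have hsub : {ω : Ω | h p ω = 1} ∪ {ω : Ω | h p ω = -1} ⊆ {ω : Ω | ‖h p ω‖ = 1} := by
    rintro ω (hω | hω) <;> simp only [Set.mem_setOf_eq] at * <;> rw [hω] <;> simp
  have hfull : volume {ω : Ω | ‖h p ω‖ = 1} = 1 := by
    refine le_antisymm prob_le_one ?_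
    calc (1:ENNReal) = volume ({ω : Ω | h p ω = 1} ∪ {ω : Ω | h p ω = -1}) := hunion.symm
      _ ≤ volume {ω : Ω | ‖h p ω‖ = 1} := measure_mono hsub
  have hA : MeasurableSet {z : ℂ | ‖z‖ = 1} :=
    measurable_norm (measurableSet_singleton (1:ℝ))
  exact ae_of_prob_eq_one (hmeas p hA) hfull

lemma main_aux {Ω : Type*} [MeasureSpace Ω] [IsProbabilityMeasure (volume : Measure Ω)]
    (h : ℕ → Ω → ℂ) (hmeas : ∀ n, Measurable (h n))
    (hind : iIndepFun (fun p : Nat.Primes => h p) volume)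
    (hsym : ∀ p : ℕ, p.Prime →
      Measure.map (fun ω => - h p ω) volume = Measure.map (h p) volume)
    (hnorm1 : ∀ p : ℕ, p.Prime → ∀ᵐ ω, ‖h p ω‖ = 1)
    (c : ℕ → ℂ) (hc : ∀ n, ‖c n‖ ≤ 1)
    (hrep : ∀ n, 1 ≤ n → ∀ ω,
      h n ω = c n * ∏ q ∈ n.primeFactors, h q ω ^ (n.factorization q))
    (lam : ℕ → ℝ) (q : ℝ) (hq0 : 0 < q) (x : ℝ) (hx : 2 ≤ x) :
    (∫ ω, ‖∑ n ∈ (Finset.Icc 1 ⌊x⌋₊).filter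
          (fun n => ∃ p : ℕ, p.Prime ∧ p ∣ n ∧ Real.sqrt x < p),
        h n ω * lam n‖ ^ (2 * q)) ≤
      2 * ∫ ω, ‖∑ n ∈ Finset.Icc 1 ⌊x⌋₊, h n ω * lam n‖ ^ (2 * q) := by
  have hx0 : (0:ℝ) ≤ x := by linarith
  set r := 2 * q with hrdef
  have hr : 0 < r := by positivity
  set N := ⌊x⌋₊ with hN
  have hNx : (N : ℝ) ≤ x := Nat.floor_le hx0
  set m : ℕ → Ω → ℂ := fun n ω => ∏ q ∈ n.primeFactors, h q ω ^ (n.factorization q) with hm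
  have hmmeas : ∀ n, Measurable (m n) := fun n =>
    Finset.measurable_prod _ (fun q _ => (hmeas q).pow_const _)
  set w : ℕ → ℂ := fun n => c n * (lam n : ℂ) with hw
  set Q : Finset ℕ :=
    (Finset.range (N+1)).filter (fun p => Nat.Prime p ∧ Real.sqrt x < p) with hQ
  have hQprime : ∀ p ∈ Q, Nat.Prime p := fun p hp => (Finset.mem_filter.mp hp).2.1
  have hQbig : ∀ p ∈ Q, N < p * p := by
    intro p hp
    have hsqrt : Real.sqrt x < p := (Finset.mem_filter.mp hp).2.2
    have h1 : x < (p:ℝ) * p := by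
      have := Real.sqrt_nonneg x
      nlinarith [Real.mul_self_sqrt hx0]
    have : (N:ℝ) < (p:ℝ) * p := lt_of_le_of_lt hNx h1
    exact_mod_cast this
  have hequiv : ∀ n ∈ Finset.Icc 1 N,
      ((∃ p ∈ Q, p ∣ n) ↔ (∃ p : ℕ, p.Prime ∧ p ∣ n ∧ Real.sqrt x < p)) := by
    intro n hn
    rw [Finset.mem_Icc] at hn
    constructor
    · rintro ⟨p, hpQ, hpdvd⟩
      exact ⟨p, hQprime p hpQ, hpdvd, (Finset.mem_filter.mp hpQ).2.2⟩
    · rintro ⟨p, hpp, hpdvd, hpsq⟩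
      refine ⟨p, ?_, hpdvd⟩
      rw [hQ, Finset.mem_filter, Finset.mem_range]
      exact ⟨Nat.lt_succ_of_le (le_trans (Nat.le_of_dvd (by omega) hpdvd) hn.2),
        hpp, hpsq⟩
  have hrw : ∀ n ∈ Finset.Icc 1 N, ∀ ω, h n ω * (lam n : ℂ) = m n ω * w n := by
    intro n hn ω
    rw [Finset.mem_Icc] at hn
    rw [hrep n hn.1 ω]
    simp only [hm, hw]
    ring
  set SF : Ω → ℂ := fun ω => ∑ n ∈ Finset.Icc 1 N, m n ω * w n with hSF
  set SG : Ω → ℂ := fun ω => ∑ n ∈ Finset.Icc 1 N,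
    (if ∃ p ∈ Q, p ∣ n then (-1:ℂ) else 1) * (m n ω * w n) with hSG
  have hcore : ∫ ω, ‖SG ω‖ ^ r = ∫ ω, ‖SF ω‖ ^ r :=
    core_flip h hmeas hind hsym N w r hr.le Q hQprime hQbig
  -- LHS sum equals (SF - SG)/2
  have hA : ∀ ω, (∑ n ∈ (Finset.Icc 1 N).filter
        (fun n => ∃ p : ℕ, p.Prime ∧ p ∣ n ∧ Real.sqrt x < p), h n ω * (lam n : ℂ))
      = (SF ω - SG ω) / 2 := by
    intro ω
    have hdiff : SF ω - SG ω = ∑ n ∈ Finset.Icc 1 N,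
        (if ∃ p ∈ Q, p ∣ n then (2:ℂ) else 0) * (m n ω * w n) := by
      rw [hSF, hSG, ← Finset.sum_sub_distrib]
      apply Finset.sum_congr rfl
      intro n _
      by_cases hcond : ∃ p ∈ Q, p ∣ n
      · rw [if_pos hcond, if_pos hcond]; ring
      · rw [if_neg hcond, if_neg hcond]; ring
    have hsum2 : ∑ n ∈ Finset.Icc 1 N,
        (if ∃ p ∈ Q, p ∣ n then (2:ℂ) else 0) * (m n ω * w n) =
        2 * ∑ n ∈ (Finset.Icc 1 N).filter (fun n => ∃ p ∈ Q, p ∣ n), m n ω * w n := by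
      rw [Finset.mul_sum, Finset.sum_filter]
      apply Finset.sum_congr rfl
      intro n _
      by_cases hcond : ∃ p ∈ Q, p ∣ n
      · rw [if_pos hcond, if_pos hcond]
      · rw [if_neg hcond, if_neg hcond]; ring
    have hfiltereq : (Finset.Icc 1 N).filter (fun n => ∃ p ∈ Q, p ∣ n) =
        (Finset.Icc 1 N).filter (fun n => ∃ p : ℕ, p.Prime ∧ p ∣ n ∧ Real.sqrt x < p) :=
      Finset.filter_congr (fun n hn => by
        constructor
        · intro hcb; exact (hequiv n hn).mp hcb
        · intro hcb; exact (hequiv n hn).mpr hcb)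
    have hsum3 : ∑ n ∈ (Finset.Icc 1 N).filter
          (fun n => ∃ p : ℕ, p.Prime ∧ p ∣ n ∧ Real.sqrt x < p), h n ω * (lam n : ℂ) =
        ∑ n ∈ (Finset.Icc 1 N).filter (fun n => ∃ p ∈ Q, p ∣ n), m n ω * w n := by
      rw [hfiltereq]
      apply Finset.sum_congr rfl
      intro n hn
      exact hrw n (Finset.mem_of_mem_filter n hn) ω
    rw [hsum3, hdiff, hsum2]
    ring
  -- pointwise bound
  have hpt : ∀ ω, ‖(SF ω - SG ω) / 2‖ ^ r ≤ ‖SF ω‖ ^ r + ‖SG ω‖ ^ r := by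
    intro ω
    have h1 : ‖(SF ω - SG ω) / 2‖ ≤ max ‖SF ω‖ ‖SG ω‖ := by
      rw [norm_div]
      have h2 : ‖SF ω - SG ω‖ ≤ ‖SF ω‖ + ‖SG ω‖ := norm_sub_le _ _
      have h3 : ‖(2:ℂ)‖ = 2 := by norm_num
      rw [h3]
      have h4 : ‖SF ω‖ ≤ max ‖SF ω‖ ‖SG ω‖ := le_max_left _ _
      have h5 : ‖SG ω‖ ≤ max ‖SF ω‖ ‖SG ω‖ := le_max_right _ _
      linarith
    calc ‖(SF ω - SG ω) / 2‖ ^ r ≤ (max ‖SF ω‖ ‖SG ω‖) ^ r :=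
          Real.rpow_le_rpow (norm_nonneg _) h1 hr.le
      _ ≤ ‖SF ω‖ ^ r + ‖SG ω‖ ^ r := by
          rcases max_cases ‖SF ω‖ ‖SG ω‖ with ⟨he, _⟩ | ⟨he, _⟩ <;> rw [he]
          · exact le_add_of_nonneg_right (Real.rpow_nonneg (norm_nonneg _) r)
          · exact le_add_of_nonneg_left (Real.rpow_nonneg (norm_nonneg _) r)
  -- integrability
  have haeE : ∀ᵐ ω, ∀ p ∈ (((Finset.range (N+1)).filter Nat.Prime : Finset ℕ) : Set ℕ),
      ‖h p ω‖ = 1 := by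
    rw [ae_ball_iff (((Finset.range (N+1)).filter Nat.Prime : Finset ℕ) : Set ℕ).to_countable]
    intro p hp
    exact hnorm1 p (Finset.mem_filter.mp hp).2
  set M : ℝ := ∑ n ∈ Finset.Icc 1 N, ‖w n‖ with hM
  have hbound : ∀ᵐ ω, ‖SF ω‖ ≤ M ∧ ‖SG ω‖ ≤ M := by
    filter_upwards [haeE] with ω hω
    have hmn : ∀ n ∈ Finset.Icc 1 N, ‖m n ω‖ = 1 := by
      intro n hn
      rw [Finset.mem_Icc] at hn
      rw [hm]
      simp only
      rw [norm_prod]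
      rw [Finset.prod_eq_one]
      intro i hi
      rw [norm_pow, hω i (Finset.mem_coe.mpr (mem_bigP hn.1 hn.2 hi)), one_pow]
    constructor
    · refine le_trans (norm_sum_le _ _) ?_
      rw [hM]
      apply Finset.sum_le_sum
      intro n hn
      rw [norm_mul, hmn n hn, one_mul]
    · refine le_trans (norm_sum_le _ _) ?_
      rw [hM]
      apply Finset.sum_le_sum
      intro n hn
      rw [norm_mul, norm_mul, hmn n hn, one_mul]
      by_cases hcond : ∃ p ∈ Q, p ∣ n
      · rw [if_pos hcond]; simp
      · rw [if_neg hcond]; simp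
  have hSFmeas : Measurable SF :=
    Finset.measurable_sum _ (fun n _ => (hmmeas n).mul_const _)
  have hSGmeas : Measurable SG :=
    Finset.measurable_sum _ (fun n _ => (((hmmeas n).mul_const _).const_mul _))
  have hrpow_meas : ∀ (f : Ω → ℂ), Measurable f → Measurable (fun ω => ‖f ω‖ ^ r) :=
    fun f hf => (Real.continuous_rpow_const hr.le).measurable.comp hf.norm
  have hSFint : Integrable (fun ω => ‖SF ω‖ ^ r) := by
    refine Integrable.mono' (integrable_const (M ^ r))
      (hrpow_meas SF hSFmeas).aestronglyMeasurable ?_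
    filter_upwards [hbound] with ω hω
    rw [Real.norm_eq_abs, abs_of_nonneg (Real.rpow_nonneg (norm_nonneg _) r)]
    exact Real.rpow_le_rpow (norm_nonneg _) hω.1 hr.le
  have hSGint : Integrable (fun ω => ‖SG ω‖ ^ r) := by
    refine Integrable.mono' (integrable_const (M ^ r))
      (hrpow_meas SG hSGmeas).aestronglyMeasurable ?_
    filter_upwards [hbound] with ω hω
    rw [Real.norm_eq_abs, abs_of_nonneg (Real.rpow_nonneg (norm_nonneg _) r)]
    exact Real.rpow_le_rpow (norm_nonneg _) hω.2 hr.le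
  have hfinal : ∫ ω, ‖∑ n ∈ (Finset.Icc 1 N).filter
        (fun n => ∃ p : ℕ, p.Prime ∧ p ∣ n ∧ Real.sqrt x < p), h n ω * (lam n : ℂ)‖ ^ r
      ≤ 2 * ∫ ω, ‖SF ω‖ ^ r := by
    calc ∫ ω, ‖∑ n ∈ (Finset.Icc 1 N).filter
          (fun n => ∃ p : ℕ, p.Prime ∧ p ∣ n ∧ Real.sqrt x < p), h n ω * (lam n : ℂ)‖ ^ r
        = ∫ ω, ‖(SF ω - SG ω) / 2‖ ^ r := by
          apply integral_congr_ae
          filter_upwards with ω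
          rw [hA ω]
      _ ≤ ∫ ω, (‖SF ω‖ ^ r + ‖SG ω‖ ^ r) := by
          refine integral_mono_of_nonneg ?_ (hSFint.add hSGint) ?_
          · filter_upwards with ω using Real.rpow_nonneg (norm_nonneg _) r
          · filter_upwards with ω using hpt ω
      _ = (∫ ω, ‖SF ω‖ ^ r) + ∫ ω, ‖SG ω‖ ^ r := integral_add hSFint hSGint
      _ = 2 * ∫ ω, ‖SF ω‖ ^ r := by rw [hcore]; ring
  have hgoalrw : ∫ ω, ‖∑ n ∈ Finset.Icc 1 N, h n ω * (lam n : ℂ)‖ ^ r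
      = ∫ ω, ‖SF ω‖ ^ r := by
    apply integral_congr_ae
    filter_upwards with ω
    congr 1
    refine congrArg norm ?_
    exact Finset.sum_congr rfl (fun n hn => hrw n hn ω)
  rw [hgoalrw]
  exact hfinal

theorem large_prime_factor_moment_le
    {Ω : Type*} [MeasureSpace Ω] [IsProbabilityMeasure (volume : Measure Ω)]
    (h : ℕ → Ω → ℂ) (hh : IsSteinhausRMF h ∨ IsRademacherRMF h)
    (lam : ℕ → ℝ) (q : ℝ) (hq0 : 0 < q) (hq1 : q ≤ 1) (x : ℝ) (hx : 2 ≤ x) :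
    (∫ ω, ‖∑ n ∈ (Finset.Icc 1 ⌊x⌋₊).filter
          (fun n => ∃ p : ℕ, p.Prime ∧ p ∣ n ∧ Real.sqrt x < p),
        h n ω * lam n‖ ^ (2 * q)) ≤
      2 * ∫ ω, ‖∑ n ∈ Finset.Icc 1 ⌊x⌋₊, h n ω * lam n‖ ^ (2 * q) := by
  rcases hh with hS | hR
  · obtain ⟨hmeas, hmul, hone, hind, hlaw⟩ := hS
    have hlaw' : ∀ p : ℕ, p.Prime → Measure.map (h p) volume =
        Measure.map eFun (volume.restrict (Set.Ioc (0:ℝ) 1)) := hlaw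
    have hsym : ∀ p : ℕ, p.Prime →
        Measure.map (fun ω => - h p ω) volume = Measure.map (h p) volume := by
      intro p hp
      have h1 : (fun ω => -h p ω) = (fun z : ℂ => -z) ∘ h p := rfl
      rw [h1, ← Measure.map_map measurable_neg (hmeas p), hlaw' p hp,
        Measure.map_map measurable_neg eFun_continuous.measurable]
      have h2 : ((fun z : ℂ => -z) ∘ eFun) = fun t => - eFun t := rfl
      rw [h2, map_neg_eFun, ← hlaw' p hp]
    exact main_aux h hmeas hind hsym (steinhaus_norm_one h hmeas hlaw')
      (fun _ => 1) (fun n => by norm_num)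
      (fun n hn ω => by rw [one_mul]; exact steinhaus_rep h hmul hone n hn ω)
      lam q hq0 x hx
  · obtain ⟨hmeas, hsf, hnsf, hind, hlaw⟩ := hR
    have hsym : ∀ p : ℕ, p.Prime →
        Measure.map (fun ω => - h p ω) volume = Measure.map (h p) volume :=
      fun p hp => rademacher_sym (h p) (hmeas p) (hlaw p hp).1 (hlaw p hp).2
    exact main_aux h hmeas hind hsym (rademacher_norm_one h hmeas hlaw)
      (fun n => if Squarefree n then (1:ℂ) else 0)
      (fun n => by by_cases hs : Squarefree n <;> simp [hs])
      (fun n hn ω => rademacher_rep h hsf hnsf n hn ω)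
      lam q hq0 x hx
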